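/- Theorem 3.1(c). Fix t ∈ ℝ. Suppose x ∈ 𝓓_{ε1,ε3}, g is an admissible window function, σ(t) > 0 is such that the zones O_k, 0 ≤ k ≤ K, are pairwise disjoint, Err_ℓ(t) < (1/2)|G_ℓ(0)| A_ℓ(t) for each ℓ, and 2M(t)(τ0 + Π_0(t)) ≤ g_0(t) μ(t). Let ε̃1 satisfy M(t)(τ0 + Π_0(t)) ≤ ε̃1 ≤ g_0(t)μ(t) − M(t)(τ0 + Π_0(t)); let η̌_0 = 0 and η̌_ℓ(t) = argmax_{η ∈ 𝓗_{t,ℓ}} |Ṽ_x(t,η)| for 1 ≤ ℓ ≤ K. Then for each ℓ = 0,1,…,K, |Ṽ_x(t, η̌_ℓ) − G_ℓ(0) x_ℓ(t)| ≤ Err_ℓ(t) + 2π I_1 A_ℓ(t) · |G_ℓ|^{−1}(|G_ℓ(0)| − 2 Err_ℓ(t)/A_ℓ(t)). -/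

import Mathlib

open MeasureTheory Real

noncomputable section

/-- The adaptive short-time Fourier transform with time-varying window width `σ`. -/
def aSTFT (x : ℝ → ℂ) (g : ℝ → ℝ) (σ : ℝ → ℝ) (t η : ℝ) : ℂ :=
  ∫ τ : ℝ, x (t + τ) * (((σ t)⁻¹ * g (τ / σ t) : ℝ) : ℂ) *
    Complex.exp (-(2 * (π : ℂ) * η * τ) * Complex.I)

/-- The absolute moments `I_n = ∫ |τ^n g(τ)| dτ` of the window. -/
def momentI (g : ℝ → ℝ) (n : ℕ) : ℝ := ∫ τ : ℝ, |τ| ^ n * |g τ|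

/-- The `k`-th component `x_k(s) = A_k(s) e^{2πi φ_k(s)}`. -/
def xcomp (A φ : ℕ → ℝ → ℝ) (k : ℕ) (s : ℝ) : ℂ :=
  (A k s : ℂ) * Complex.exp ((2 * (π : ℂ) * φ k s) * Complex.I)

/-- `M(t) = Σ_{k=0}^K A_k(t)`. -/
def Msum (K : ℕ) (A : ℕ → ℝ → ℝ) (t : ℝ) : ℝ := ∑ k ∈ Finset.range (K + 1), A k t

/-- `μ(t) = min_{0 ≤ k ≤ K} A_k(t)`. -/
def muMin (K : ℕ) (A : ℕ → ℝ → ℝ) (t : ℝ) : ℝ :=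
  (Finset.range (K + 1)).inf' (by simp) fun k => A k t

/-- `G(ξ) = ∫ e^{iπcτ²} g(τ) e^{−2πiξτ} dτ`, the Fourier transform of the
chirp-modulated window. -/
def chirpG (g : ℝ → ℝ) (c ξ : ℝ) : ℂ :=
  ∫ τ : ℝ, Complex.exp (((π * c * τ ^ 2 : ℝ) : ℂ) * Complex.I) * (g τ : ℂ) *
    Complex.exp (-(2 * (π : ℂ) * ξ * τ) * Complex.I)

/-- `ğ(ξ,λ) = ∫ g(τ) e^{−2πiξτ − iπλτ²} dτ` (used to define admissibility). -/
def breveG (g : ℝ → ℝ) (lam ξ : ℝ) : ℂ :=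
  ∫ τ : ℝ, (g τ : ℂ) *
    Complex.exp (-(2 * (π : ℂ) * ξ * τ) * Complex.I - ((π * lam * τ ^ 2 : ℝ) : ℂ) * Complex.I)

/-- The chirp-rate parameter `σ(t)² φ''_k(t)` of the `k`-th component. -/
def crate (φ : ℕ → ℝ → ℝ) (σ : ℝ → ℝ) (k : ℕ) (t : ℝ) : ℝ :=
  σ t ^ 2 * deriv (deriv (φ k)) t

/-- `Π_0(t) = ε1 I_1 σ(t) + (π/3) ε3 I_3 σ(t)³`. -/
def Pi0 (g : ℝ → ℝ) (σ : ℝ → ℝ) (ε1 ε3 t : ℝ) : ℝ :=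
  ε1 * momentI g 1 * σ t + π / 3 * ε3 * momentI g 3 * σ t ^ 3

/-- `Υ_{k,ℓ} = α_k + α_ℓ + 2 Σ_{j between k and ℓ} α_j`. -/
def Ups (αf : ℕ → ℝ) (k l : ℕ) : ℝ :=
  αf k + αf l + 2 * ∑ j ∈ Finset.Ioo (min k l) (max k l), αf j

/-- `Err_ℓ(t) = M(t)Π_0(t) + Σ_{k≠ℓ} A_k(t) |G_k(Υ_{k,ℓ} − α_ℓ)|`. -/
def ErrL (K : ℕ) (A φ : ℕ → ℝ → ℝ) (g : ℝ → ℝ) (σ : ℝ → ℝ) (αf : ℕ → ℝ)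
    (ε1 ε3 : ℝ) (l : ℕ) (t : ℝ) : ℝ :=
  Msum K A t * Pi0 g σ ε1 ε3 t +
    ∑ k ∈ (Finset.range (K + 1)).erase l,
      A k t * ‖chirpG g (crate φ σ k t) (Ups αf k l - αf l)‖

/-- `g_0(t) = min_{0 ≤ k ≤ K} |G_k(0)|`. -/
def g0min (K : ℕ) (g : ℝ → ℝ) (φ : ℕ → ℝ → ℝ) (σ : ℝ → ℝ) (t : ℝ) : ℝ :=
  (Finset.range (K + 1)).inf' (by simp) fun k => ‖chirpG g (crate φ σ k t) 0‖

/-- `𝓖_t = {η : |Ṽ_x(t,η)| > ε̃1}`. -/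
def Gt (x : ℝ → ℂ) (g : ℝ → ℝ) (σ : ℝ → ℝ) (t eps : ℝ) : Set ℝ :=
  {η | eps < ‖aSTFT x g σ t η‖}

/-- `𝓗_{t,k} = {η ∈ 𝓖_t : |η − φ'_k(t)| < α_k/σ(t)}`. -/
def Htk (x : ℝ → ℂ) (g : ℝ → ℝ) (σ : ℝ → ℝ) (φ : ℕ → ℝ → ℝ) (αf : ℕ → ℝ)
    (t eps : ℝ) (k : ℕ) : Set ℝ :=
  {η | η ∈ Gt x g σ t eps ∧ |η - deriv (φ k) t| < αf k / σ t}


section Helpers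

open intervalIntegral

lemma norm_exp_I_sub_one_le (θ : ℝ) : ‖Complex.exp ((θ:ℂ) * Complex.I) - 1‖ ≤ |θ| := by
  set a : ℂ := ((θ/2 : ℝ) : ℂ) with ha
  have hsin : 2 * Complex.sin a * Complex.I = Complex.exp (a*Complex.I) - Complex.exp (-(a*Complex.I)) := by
    rw [Complex.sin]
    have := Complex.I_sq
    field_simp
    ring_nf
    rw [Complex.I_sq]
    ring
  have key : Complex.exp ((θ:ℂ)*Complex.I) - 1 = Complex.exp (a*Complex.I) * (2 * Complex.sin a * Complex.I) := by
    rw [hsin, mul_sub, ← Complex.exp_add, ← Complex.exp_add]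
    have h1 : a*Complex.I + a*Complex.I = (θ:ℂ)*Complex.I := by rw [ha]; push_cast; ring
    have h2 : a*Complex.I + -(a*Complex.I) = 0 := by ring
    rw [h1, h2, Complex.exp_zero]
  rw [key]
  rw [norm_mul, Complex.norm_exp_ofReal_mul_I, one_mul]
  rw [show Complex.sin a = ((Real.sin (θ/2) : ℝ) : ℂ) by rw [ha, Complex.ofReal_sin]]
  rw [norm_mul, norm_mul, Complex.norm_I, mul_one]
  simp only [Complex.norm_real, Real.norm_eq_abs, Complex.norm_ofNat]
  calc 2 * |Real.sin (θ/2)| ≤ 2 * |θ/2| := by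
        have := Real.abs_sin_le_abs (x := θ/2); linarith [this]
    _ = |θ| := by rw [abs_div]; rw [abs_two]; ring

lemma int_pow_bound (w : ℝ → ℝ) (hw : Continuous w) (c : ℝ) (n : ℕ)
    (hb : ∀ u, |w u| ≤ c * |u| ^ n) (h : ℝ) :
    |∫ u in (0:ℝ)..h, w u| ≤ c * |h| ^ (n+1) / (n+1) := by
  have hc : 0 ≤ c := by
    have h1 := hb 1; simp at h1; exact (abs_nonneg (w 1)).trans h1
  rcases le_total 0 h with hh | hh
  · have h1 : |∫ u in (0:ℝ)..h, w u| ≤ ∫ u in (0:ℝ)..h, |w u| := by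
      have hn : 0 ≤ ∫ u in (0:ℝ)..h, |w u| :=
        intervalIntegral.integral_nonneg hh (fun u _ => abs_nonneg _)
      have := intervalIntegral.norm_integral_le_abs_integral_norm (f := w) (a := (0:ℝ)) (b := h) (μ := volume)
      simp only [Real.norm_eq_abs] at this
      exact this.trans (le_of_eq (abs_of_nonneg hn))
    have h2 : (∫ u in (0:ℝ)..h, |w u|) ≤ ∫ u in (0:ℝ)..h, c * u ^ n := by
      apply intervalIntegral.integral_mono_on hh
      · exact (hw.abs).intervalIntegrable _ _
      · exact ((continuous_const.mul (continuous_pow n)).intervalIntegrable _ _)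
      · intro u hu
        calc |w u| ≤ c * |u| ^ n := hb u
          _ = c * u ^ n := by rw [abs_of_nonneg hu.1]
    have h3 : (∫ u in (0:ℝ)..h, c * u ^ n) = c * h ^ (n+1) / (n+1) := by
      rw [intervalIntegral.integral_const_mul, integral_pow]
      simp; ring
    rw [abs_of_nonneg hh]
    calc |∫ u in (0:ℝ)..h, w u| ≤ ∫ u in (0:ℝ)..h, |w u| := h1
      _ ≤ c * h ^ (n+1)/(n+1) := by rw [← h3]; exact h2
  · have h1 : |∫ u in (0:ℝ)..h, w u| = |∫ u in h..(0:ℝ), w u| := by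
      rw [intervalIntegral.integral_symm]; rw [abs_neg]
    have h1' : |∫ u in h..(0:ℝ), w u| ≤ ∫ u in h..(0:ℝ), |w u| := by
      have hn : 0 ≤ ∫ u in h..(0:ℝ), |w u| :=
        intervalIntegral.integral_nonneg hh (fun u _ => abs_nonneg _)
      have := intervalIntegral.norm_integral_le_abs_integral_norm (f := w) (a := h) (b := (0:ℝ)) (μ := volume)
      simp only [Real.norm_eq_abs] at this
      exact this.trans (le_of_eq (abs_of_nonneg hn))
    have h2 : (∫ u in h..(0:ℝ), |w u|) ≤ ∫ u in h..(0:ℝ), c * (-u) ^ n := by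
      apply intervalIntegral.integral_mono_on hh
      · exact (hw.abs).intervalIntegrable _ _
      · exact ((continuous_const.mul ((continuous_neg).pow n)).intervalIntegrable _ _)
      · intro u hu
        calc |w u| ≤ c * |u| ^ n := hb u
          _ = c * (-u) ^ n := by rw [abs_of_nonpos hu.2]
    have h3 : (∫ u in h..(0:ℝ), c * (-u) ^ n) = c * (-h) ^ (n+1) / (n+1) := by
      rw [intervalIntegral.integral_const_mul]
      rw [show (∫ u in h..(0:ℝ), (-u)^n) = ∫ u in (-(0:ℝ))..(-h), u^n by
        rw [← intervalIntegral.integral_comp_neg (fun u => u ^ n)]]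
      rw [integral_pow]
      simp; ring
    rw [abs_of_nonpos hh]
    calc |∫ u in (0:ℝ)..h, w u| = |∫ u in h..(0:ℝ), w u| := h1
      _ ≤ ∫ u in h..(0:ℝ), |w u| := h1'
      _ ≤ c * (-h)^(n+1)/(n+1) := by rw [← h3]; exact h2

lemma taylor3 (φ : ℝ → ℝ) (hφ : ContDiff ℝ 3 φ) (ε3 : ℝ)
    (h3 : ∀ s, |deriv (deriv (deriv φ)) s| ≤ ε3) (t : ℝ) :
    ∀ h : ℝ, |φ (t+h) - φ t - deriv φ t * h - deriv (deriv φ) t * h^2/2| ≤ ε3 * |h|^3/6 := by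
  set f1 := deriv φ
  set f2 := deriv f1
  set f3 := deriv f2
  have hφ' : ContDiff ℝ (2+1) φ := by exact_mod_cast hφ
  have h1 : ContDiff ℝ 2 f1 := (contDiff_succ_iff_deriv.mp hφ').2.2
  have h1' : ContDiff ℝ (1+1) f1 := by exact_mod_cast h1
  have h2 : ContDiff ℝ 1 f2 := (contDiff_succ_iff_deriv.mp h1').2.2
  have h2' : ContDiff ℝ (0+1) f2 := by exact_mod_cast h2
  have hdφ : Differentiable ℝ φ := hφ.differentiable (by norm_num)
  have hdf1 : Differentiable ℝ f1 := h1.differentiable (by norm_num)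
  have hdf2 : Differentiable ℝ f2 := h2.differentiable (by norm_num)
  have hcf2 : Continuous f2 := hdf2.continuous
  have hcf3 : Continuous f3 := (contDiff_succ_iff_deriv.mp h2').2.2.continuous
  have step1 : ∀ u : ℝ, |f2 (t+u) - f2 t| ≤ ε3 * |u| := by
    intro u
    have key : f2 (t+u) - f2 t = ∫ v in (0:ℝ)..u, f3 (t+v) := by
      rw [intervalIntegral.integral_comp_add_left f3 t]
      rw [intervalIntegral.integral_deriv_eq_sub (fun x _ => hdf2 x)
        (hcf3.intervalIntegrable _ _)]
      rw [show t+0 = t by ring]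
    rw [key]
    have := int_pow_bound (fun v => f3 (t+v)) (hcf3.comp (continuous_const.add continuous_id)) ε3 0
      (fun v => by simpa using h3 (t+v)) u
    simpa using this
  have step2 : ∀ u : ℝ, |f1 (t+u) - f1 t - f2 t * u| ≤ ε3/2 * |u|^2 := by
    intro u
    have key : f1 (t+u) - f1 t - f2 t * u = ∫ v in (0:ℝ)..u, (f2 (t+v) - f2 t) := by
      have hder : ∀ v ∈ Set.uIcc (0:ℝ) u, HasDerivAt (fun w => f1 (t+w) - f2 t * w) (f2 (t+v) - f2 t) v := by
        intro v _
        have ha : HasDerivAt (fun w : ℝ => f1 (t+w)) (f2 (t+v)) v := by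
          have := ((hdf1 (t+v)).hasDerivAt).comp v ((hasDerivAt_id v).const_add t)
          rw [mul_one] at this; exact this
        have h := ha.sub ((hasDerivAt_id v).const_mul (f2 t)); simp only [id_eq, mul_one] at h; exact h
      rw [intervalIntegral.integral_eq_sub_of_hasDerivAt hder
        (((hcf2.comp (continuous_const.add continuous_id)).sub continuous_const).intervalIntegrable _ _)]
      simp
      ring
    rw [key]
    have := int_pow_bound (fun v => f2 (t+v) - f2 t)
      ((hcf2.comp (continuous_const.add continuous_id)).sub continuous_const) ε3 1
      (fun v => by simpa using step1 v) u
    calc |∫ v in (0:ℝ)..u, (f2 (t+v) - f2 t)| ≤ ε3 * |u|^(1+1)/(1+1) := by simpa using this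
      _ = ε3/2 * |u|^2 := by norm_num; ring
  intro h
  have key : φ (t+h) - φ t - f1 t * h - f2 t * h^2/2
      = ∫ v in (0:ℝ)..h, (f1 (t+v) - f1 t - f2 t * v) := by
    have hder : ∀ v ∈ Set.uIcc (0:ℝ) h,
        HasDerivAt (fun w => φ (t+w) - f1 t * w - f2 t * w^2/2) (f1 (t+v) - f1 t - f2 t * v) v := by
      intro v _
      have ha : HasDerivAt (fun w : ℝ => φ (t+w)) (f1 (t+v)) v := by
        have := ((hdφ (t+v)).hasDerivAt).comp v ((hasDerivAt_id v).const_add t)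
        rw [mul_one] at this; exact this
      have hb : HasDerivAt (fun w : ℝ => f1 t * w) (f1 t) v := by
        simpa using (hasDerivAt_id v).const_mul (f1 t)
      have hc : HasDerivAt (fun w : ℝ => f2 t * w^2/2) (f2 t * v) v := by
        have hpow : HasDerivAt (fun w : ℝ => w^2) (2*v) v := by
          simpa using (hasDerivAt_pow 2 v)
        have := (hpow.const_mul (f2 t)).div_const 2
        rw [show f2 t * v = f2 t * (2*v)/2 by ring]
        exact this
      exact (ha.sub hb).sub hc
    rw [intervalIntegral.integral_eq_sub_of_hasDerivAt hder
      ((((hdf1.continuous.comp (continuous_const.add continuous_id)).sub continuous_const).sub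
        (continuous_const.mul continuous_id)).intervalIntegrable _ _)]
    simp
    ring
  rw [key]
  have := int_pow_bound (fun v => f1 (t+v) - f1 t - f2 t * v)
    (((hdf1.continuous.comp (continuous_const.add continuous_id)).sub continuous_const).sub
      (continuous_const.mul continuous_id)) (ε3/2) 2
    (fun v => step2 v) h
  calc |∫ v in (0:ℝ)..h, (f1 (t+v) - f1 t - f2 t * v)| ≤ (ε3/2) * |h|^(2+1)/(2+1) := this
    _ = ε3 * |h|^3/6 := by ring

lemma norm_mul_exp_sub (a b θ1 θ2 : ℝ) :
    ‖(a:ℂ) * Complex.exp ((θ1:ℂ)*Complex.I) - (b:ℂ) * Complex.exp ((θ2:ℂ)*Complex.I)‖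
      ≤ |a - b| + |b| * |θ1 - θ2| := by
  have hid : (a:ℂ) * Complex.exp ((θ1:ℂ)*Complex.I) - (b:ℂ) * Complex.exp ((θ2:ℂ)*Complex.I)
      = ((a - b : ℝ):ℂ) * Complex.exp ((θ1:ℂ)*Complex.I)
        + (b:ℂ) * (Complex.exp ((θ2:ℂ)*Complex.I) *
            (Complex.exp (((θ1 - θ2 : ℝ):ℂ)*Complex.I) - 1)) := by
    rw [mul_sub, ← Complex.exp_add]
    push_cast
    ring_nf
  rw [hid]
  refine (norm_add_le _ _).trans ?_
  rw [norm_mul, norm_mul, norm_mul]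
  rw [Complex.norm_exp_ofReal_mul_I θ1]
  rw [Complex.norm_exp_ofReal_mul_I θ2]
  simp only [Complex.norm_real, Real.norm_eq_abs, mul_one, one_mul]
  gcongr
  exact norm_exp_I_sub_one_le _

lemma aSTFT_subst (x : ℝ → ℂ) (g : ℝ → ℝ) (σ : ℝ → ℝ) (t η : ℝ) (hs : 0 < σ t) :
    aSTFT x g σ t η = ∫ u : ℝ, x (t + σ t * u) * (g u : ℂ) *
      Complex.exp (-(2 * (π : ℂ) * η * (σ t * u)) * Complex.I) := by
  rw [aSTFT]
  set s := σ t with hsdef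
  have h := MeasureTheory.Measure.integral_comp_mul_left
    (fun τ : ℝ => x (t + τ) * ((s⁻¹ * g (τ / s) : ℝ) : ℂ) *
      Complex.exp (-(2 * (π:ℂ) * η * τ) * Complex.I)) s
  rw [abs_of_pos (inv_pos.mpr hs)] at h
  have hsne : (s:ℂ) ≠ 0 := by exact_mod_cast hs.ne'
  have h2 : (∫ u:ℝ, x (t + s*u) * (g u : ℂ) *
        Complex.exp (-(2*(π:ℂ)*η*((s:ℂ)*(u:ℂ)))*Complex.I))
      = s • ∫ u:ℝ, x (t+s*u) * ((s⁻¹ * g (s*u/s) : ℝ):ℂ) *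
        Complex.exp (-(2*(π:ℂ)*η*((s*u : ℝ):ℂ))*Complex.I) := by
    rw [← MeasureTheory.integral_smul]
    congr 1; ext u
    rw [Complex.real_smul]
    push_cast
    field_simp
  rw [h2, h, smul_smul, mul_inv_cancel₀ hs.ne', one_smul]

lemma chirpG_eq_breveG (g : ℝ → ℝ) (c ξ : ℝ) : chirpG g c ξ = breveG g (-c) ξ := by
  rw [chirpG, breveG]
  congr 1; ext τ
  rw [mul_comm (Complex.exp (((π * c * τ ^ 2 : ℝ) : ℂ) * Complex.I)) ((g τ : ℂ))]
  rw [mul_assoc, ← Complex.exp_add]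
  congr 1
  push_cast
  ring

lemma chirpG_eq_fourier (g : ℝ → ℝ) (c ξ : ℝ) :
    chirpG g c ξ = FourierTransform.fourier
      (fun τ => Complex.exp (((π * c * τ ^ 2 : ℝ) : ℂ) * Complex.I) * (g τ : ℂ)) ξ := by
  rw [Real.fourier_real_eq_integral_exp_smul, chirpG]
  congr 1; ext τ
  rw [smul_eq_mul]
  push_cast
  ring

lemma chirp_integrand_integrable (g : ℝ → ℝ) (hg : Integrable g) (c : ℝ) :
    Integrable (fun τ : ℝ => Complex.exp (((π * c * τ ^ 2 : ℝ) : ℂ) * Complex.I) * (g τ : ℂ)) := by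
  have hgm : AEStronglyMeasurable (fun u : ℝ => (g u : ℂ)) volume :=
    Complex.continuous_ofReal.comp_aestronglyMeasurable hg.aestronglyMeasurable
  apply Integrable.mono' hg.norm
  · apply AEStronglyMeasurable.mul _ hgm
    apply Continuous.aestronglyMeasurable
    exact Complex.continuous_exp.comp
      ((Complex.continuous_ofReal.comp (continuous_const.mul (continuous_pow 2))).mul continuous_const)
  · filter_upwards with u
    rw [norm_mul, Complex.norm_exp_ofReal_mul_I, one_mul,
      Complex.norm_real, Real.norm_eq_abs]

lemma chirpG_lip (g : ℝ → ℝ) (hg : Integrable g)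
    (hgi1 : Integrable fun τ : ℝ => |τ| * |g τ|) (c ξv : ℝ) :
    ‖chirpG g c ξv - chirpG g c 0‖ ≤ 2 * π * (∫ τ:ℝ, |τ| * |g τ|) * |ξv| := by
  have hgm : AEStronglyMeasurable (fun u : ℝ => (g u : ℂ)) volume :=
    Complex.continuous_ofReal.comp_aestronglyMeasurable hg.aestronglyMeasurable
  have hint : ∀ ξ : ℝ, Integrable (fun τ : ℝ =>
      Complex.exp (((π * c * τ ^ 2 : ℝ) : ℂ) * Complex.I) * (g τ : ℂ) *
        Complex.exp (-(2 * (π : ℂ) * ξ * τ) * Complex.I)) := by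
    intro ξ
    apply Integrable.mono' hg.norm
    · apply AEStronglyMeasurable.mul ((chirp_integrand_integrable g hg c).aestronglyMeasurable)
      apply Continuous.aestronglyMeasurable
      apply Complex.continuous_exp.comp
      apply Continuous.mul _ continuous_const
      apply Continuous.neg
      exact continuous_const.mul Complex.continuous_ofReal
    · filter_upwards with u
      rw [norm_mul, norm_mul, Complex.norm_exp_ofReal_mul_I,
        one_mul]
      rw [show (-(2 * (π : ℂ) * ξ * u) * Complex.I) = ((-(2*π*ξ*u) : ℝ):ℂ) * Complex.I by
        push_cast; ring]
      rw [Complex.norm_exp_ofReal_mul_I, mul_one,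
        Complex.norm_real, Real.norm_eq_abs]
  rw [chirpG, chirpG, ← MeasureTheory.integral_sub (hint ξv) (hint 0)]
  have hDint : Integrable (fun u : ℝ => 2*π*|ξv| * (|u| * |g u|)) := hgi1.const_mul _
  refine (MeasureTheory.norm_integral_le_of_norm_le hDint ?_).trans ?_
  · filter_upwards with u
    have : Complex.exp (((π * c * u ^ 2 : ℝ) : ℂ) * Complex.I) * (g u : ℂ) *
          Complex.exp (-(2 * (π : ℂ) * ξv * u) * Complex.I) -
        Complex.exp (((π * c * u ^ 2 : ℝ) : ℂ) * Complex.I) * (g u : ℂ) *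
          Complex.exp (-(2 * (π : ℂ) * (0:ℝ) * u) * Complex.I)
        = Complex.exp (((π * c * u ^ 2 : ℝ) : ℂ) * Complex.I) * (g u : ℂ) *
          (Complex.exp (((-(2*π*ξv*u) : ℝ):ℂ) * Complex.I) - 1) := by
      rw [show (-(2 * (π : ℂ) * ξv * u) * Complex.I) = ((-(2*π*ξv*u) : ℝ):ℂ) * Complex.I by
        push_cast; ring]
      rw [show (-(2 * (π : ℂ) * ((0:ℝ):ℂ) * u) * Complex.I) = 0 by push_cast; ring]
      rw [Complex.exp_zero]
      ring
    rw [this]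
    rw [norm_mul, norm_mul, Complex.norm_exp_ofReal_mul_I,
      one_mul, Complex.norm_real, Real.norm_eq_abs]
    calc |g u| * ‖Complex.exp (((-(2*π*ξv*u) : ℝ):ℂ) * Complex.I) - 1‖
        ≤ |g u| * |(-(2*π*ξv*u))| := by
          apply mul_le_mul_of_nonneg_left (norm_exp_I_sub_one_le _) (abs_nonneg _)
      _ = 2*π*|ξv| * (|u| * |g u|) := by
          rw [abs_neg, abs_mul, abs_mul, abs_mul, abs_of_pos Real.pi_pos, abs_two]
          ring
  · rw [MeasureTheory.integral_const_mul]
    apply le_of_eq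
    ring

/-- Per-component estimate. -/
lemma comp_est (Ak φk g : ℝ → ℝ) (ε1 ε3 s t η : ℝ)
    (hg : Integrable g)
    (hgi1 : Integrable fun τ : ℝ => |τ| * |g τ|)
    (hgi3 : Integrable fun τ : ℝ => |τ|^3 * |g τ|)
    (hs : 0 < s)
    (hA : Continuous Ak) (hφc : Continuous φk)
    (hCb : ∃ C, ∀ u, |Ak u| ≤ C)
    (hlip : ∀ τ, |Ak (t+τ) - Ak t| ≤ ε1 * |τ| * Ak t)
    (htay : ∀ h, |φk (t+h) - φk t - deriv φk t * h - deriv (deriv φk) t * h^2/2| ≤ ε3 * |h|^3/6)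
    (hApos : 0 < Ak t) :
    ‖(∫ u : ℝ, ((Ak (t+s*u) : ℂ) * Complex.exp ((2*(π:ℂ)*(φk (t+s*u) : ℝ))*Complex.I)) * (g u : ℂ) *
        Complex.exp (-(2*(π:ℂ)*(η:ℝ)*((s:ℂ)*(u:ℂ)))*Complex.I))
      - ((Ak t : ℂ) * Complex.exp ((2*(π:ℂ)*(φk t : ℝ))*Complex.I)) *
          chirpG g (s^2 * deriv (deriv φk) t) (s*(η - deriv φk t))‖
    ≤ Ak t * (ε1 * (∫ τ:ℝ, |τ| * |g τ|) * s + π/3 * ε3 * (∫ τ:ℝ, |τ|^3 * |g τ|) * s^3) := by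
  obtain ⟨C, hC⟩ := hCb
  set f1 := deriv φk t with hf1
  set f2 := deriv (deriv φk) t with hf2
  set c := s^2 * f2 with hc
  set ξ := s * (η - f1) with hξ
  set R : ℝ → ℝ := fun u => φk (t+s*u) - φk t - f1*(s*u) - f2*(s*u)^2/2 with hR
  have hRb : ∀ u, |R u| ≤ ε3 * s^3 * |u|^3 / 6 := by
    intro u
    have := htay (s*u)
    calc |R u| ≤ ε3 * |s*u|^3/6 := this
      _ = ε3 * s^3 * |u|^3 / 6 := by
          rw [abs_mul, abs_of_pos hs, mul_pow]; ring
  -- canonical forms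
  set θ1 : ℝ → ℝ := fun u => 2*π*(φk (t+s*u)) - 2*π*η*(s*u) with hθ1
  set θ2 : ℝ → ℝ := fun u => 2*π*(φk t) + π*c*u^2 - 2*π*ξ*u with hθ2
  set F : ℝ → ℂ := fun u => ((Ak (t+s*u) : ℂ) * Complex.exp ((2*(π:ℂ)*(φk (t+s*u) : ℝ))*Complex.I)) * (g u : ℂ) *
        Complex.exp (-(2*(π:ℂ)*(η:ℝ)*((s:ℂ)*(u:ℂ)))*Complex.I) with hF
  set H : ℝ → ℂ := fun u => ((Ak t : ℂ) * Complex.exp ((2*(π:ℂ)*(φk t : ℝ))*Complex.I)) *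
        (Complex.exp (((π * c * u ^ 2 : ℝ) : ℂ) * Complex.I) * (g u : ℂ) *
          Complex.exp (-(2 * (π : ℂ) * (ξ:ℝ) * (u:ℂ)) * Complex.I)) with hH
  have hFeq : ∀ u, F u = ((Ak (t+s*u) * g u : ℝ):ℂ) * Complex.exp (((θ1 u : ℝ):ℂ)*Complex.I) := by
    intro u
    have e1 : Complex.exp ((2*(π:ℂ)*(φk (t+s*u) : ℝ))*Complex.I) *
        Complex.exp (-(2*(π:ℂ)*(η:ℝ)*((s:ℂ)*(u:ℂ)))*Complex.I)
        = Complex.exp (((θ1 u : ℝ):ℂ)*Complex.I) := by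
      rw [← Complex.exp_add]; congr 1; simp only [hθ1]; push_cast; ring
    simp only [hF]
    rw [← e1]
    push_cast
    ring
  have hHeq : ∀ u, H u = ((Ak t * g u : ℝ):ℂ) * Complex.exp (((θ2 u : ℝ):ℂ)*Complex.I) := by
    intro u
    have e2 : Complex.exp ((2*(π:ℂ)*(φk t : ℝ))*Complex.I) *
        Complex.exp (((π * c * u ^ 2 : ℝ) : ℂ) * Complex.I) *
        Complex.exp (-(2 * (π : ℂ) * (ξ:ℝ) * (u:ℂ)) * Complex.I)
        = Complex.exp (((θ2 u : ℝ):ℂ)*Complex.I) := by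
      rw [← Complex.exp_add, ← Complex.exp_add]; congr 1; simp only [hθ2]; push_cast; ring
    simp only [hH]
    rw [← e2]
    push_cast
    ring
  have hθdiff : ∀ u, θ1 u - θ2 u = 2*π*R u := by
    intro u
    rw [hθ1, hθ2, hR]
    simp only
    rw [hc, hξ]
    ring
  -- pointwise bound
  have hpt : ∀ u, ‖F u - H u‖ ≤
      Ak t * (ε1 * s * (|u| * |g u|)) + Ak t * (π/3 * ε3 * s^3 * (|u|^3 * |g u|)) := by
    intro u
    rw [hFeq u, hHeq u]
    refine (norm_mul_exp_sub _ _ _ _).trans ?_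
    have h1 : |Ak (t+s*u) * g u - Ak t * g u| ≤ ε1 * s * |u| * (Ak t * |g u|) := by
      rw [show Ak (t+s*u) * g u - Ak t * g u = (Ak (t+s*u) - Ak t) * g u by ring, abs_mul]
      have := hlip (s*u)
      rw [abs_mul, abs_of_pos hs] at this
      calc |Ak (t+s*u) - Ak t| * |g u| ≤ (ε1 * (s*|u|) * Ak t) * |g u| := by
            apply mul_le_mul_of_nonneg_right _ (abs_nonneg _)
            exact this
        _ = ε1 * s * |u| * (Ak t * |g u|) := by ring
    have h2 : |Ak t * g u| * |θ1 u - θ2 u| ≤ Ak t * |g u| * (2*π*(ε3 * s^3 * |u|^3/6)) := by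
      rw [hθdiff u, abs_mul, abs_of_pos hApos]
      rw [show |2*π*R u| = 2*π*|R u| by rw [abs_mul, abs_of_pos (by positivity : (0:ℝ) < 2*π)]]
      apply mul_le_mul_of_nonneg_left _ (by positivity : (0:ℝ) ≤ Ak t * |g u|)
      apply mul_le_mul_of_nonneg_left (hRb u) (by positivity : (0:ℝ) ≤ 2*π)
    calc |Ak (t+s*u) * g u - Ak t * g u| + |Ak t * g u| * |θ1 u - θ2 u|
        ≤ ε1 * s * |u| * (Ak t * |g u|) + Ak t * |g u| * (2*π*(ε3 * s^3 * |u|^3/6)) := by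
          exact add_le_add h1 h2
      _ = Ak t * (ε1 * s * (|u| * |g u|)) + Ak t * (π/3 * ε3 * s^3 * (|u|^3 * |g u|)) := by ring
  -- integrability
  have hgm : AEStronglyMeasurable (fun u : ℝ => (g u : ℂ)) volume :=
    Complex.continuous_ofReal.comp_aestronglyMeasurable hg.aestronglyMeasurable
  have hFm : AEStronglyMeasurable F volume := by
    apply AEStronglyMeasurable.mul
    apply AEStronglyMeasurable.mul
    · apply Continuous.aestronglyMeasurable
      apply Continuous.mul
      · exact Complex.continuous_ofReal.comp (hA.comp (continuous_const.add (continuous_const.mul continuous_id)))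
      · apply Complex.continuous_exp.comp
        apply Continuous.mul _ continuous_const
        exact (continuous_const.mul (Complex.continuous_ofReal.comp
          (hφc.comp (continuous_const.add (continuous_const.mul continuous_id)))))
    · exact hgm
    · apply Continuous.aestronglyMeasurable
      apply Complex.continuous_exp.comp
      apply Continuous.mul _ continuous_const
      apply Continuous.neg
      exact continuous_const.mul (continuous_const.mul Complex.continuous_ofReal)
  have hFint : Integrable F := by
    apply Integrable.mono' (hg.norm.const_mul C) hFm
    filter_upwards with u
    rw [hFeq u]
    rw [norm_mul, Complex.norm_exp_ofReal_mul_I, mul_one]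
    rw [Complex.norm_real, Real.norm_eq_abs, abs_mul]
    apply mul_le_mul_of_nonneg_right (hC _) (abs_nonneg _)
  have hHm : AEStronglyMeasurable H volume := by
    apply AEStronglyMeasurable.const_mul
    apply AEStronglyMeasurable.mul
    apply AEStronglyMeasurable.mul
    · apply Continuous.aestronglyMeasurable
      apply Complex.continuous_exp.comp
      exact (Complex.continuous_ofReal.comp (continuous_const.mul (continuous_pow 2))).mul continuous_const
    · exact hgm
    · apply Continuous.aestronglyMeasurable
      apply Complex.continuous_exp.comp
      apply Continuous.mul _ continuous_const
      apply Continuous.neg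
      exact continuous_const.mul Complex.continuous_ofReal
  have hHint : Integrable H := by
    apply Integrable.mono' (hg.norm.const_mul (Ak t)) hHm
    filter_upwards with u
    rw [hHeq u]
    rw [norm_mul, Complex.norm_exp_ofReal_mul_I, mul_one]
    rw [Complex.norm_real, Real.norm_eq_abs, abs_mul, abs_of_pos hApos]
    exact le_refl _
  -- rewrite target
  have htarget : ((Ak t : ℂ) * Complex.exp ((2*(π:ℂ)*(φk t : ℝ))*Complex.I)) *
      chirpG g c ξ = ∫ u : ℝ, H u := by
    rw [chirpG, ← MeasureTheory.integral_const_mul]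
  rw [show chirpG g (s^2 * deriv (deriv φk) t) (s*(η - deriv φk t)) = chirpG g c ξ from rfl]
  rw [htarget, ← MeasureTheory.integral_sub hFint hHint]
  -- dominating function
  have hDint : Integrable (fun u : ℝ =>
      Ak t * (ε1 * s * (|u| * |g u|)) + Ak t * (π/3 * ε3 * s^3 * (|u|^3 * |g u|))) := by
    exact ((hgi1.const_mul _).const_mul _).add ((hgi3.const_mul _).const_mul _)
  refine (MeasureTheory.norm_integral_le_of_norm_le hDint (Filter.Eventually.of_forall hpt)).trans ?_
  rw [MeasureTheory.integral_add ((hgi1.const_mul _).const_mul _) ((hgi3.const_mul _).const_mul _)]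
  simp only [MeasureTheory.integral_const_mul]
  apply le_of_eq
  ring


end Helpers

set_option maxHeartbeats 2000000 in
theorem thm3_1c (K : ℕ) (A φ : ℕ → ℝ → ℝ) (ε1 ε3 : ℝ) (x : ℝ → ℂ)
    (g : ℝ → ℝ) (σ : ℝ → ℝ) (αf : ℕ → ℝ) (τ0 t epst : ℝ)
    (hε1 : 0 < ε1) (hε3 : 0 < ε3)
    (hAreg : ∀ k ≤ K, ContDiff ℝ 1 (A k))
    (hAbdd : ∀ k ≤ K, ∃ C, ∀ s, |A k s| ≤ C)
    (hφreg : ∀ k ≤ K, ContDiff ℝ 3 (φ k))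
    (hφ0 : ∀ s, φ 0 s = 0)
    (hApos : ∀ k ≤ K, ∀ s, 0 < A k s)
    (hφ'pos : ∀ k, 1 ≤ k → k ≤ K → ∃ c > 0, ∀ s, c ≤ deriv (φ k) s)
    (hφ'bdd : ∀ k, 1 ≤ k → k ≤ K → ∃ C, ∀ s, deriv (φ k) s ≤ C)
    (hfreq : ∃ d > 0, ∀ k, 2 ≤ k → k ≤ K → ∀ s, d ≤ deriv (φ k) s - deriv (φ (k - 1)) s)
    (hAlip : ∀ k ≤ K, ∀ s τ, |A k (s + τ) - A k s| ≤ ε1 * |τ| * A k s)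
    (hφ''bdd : ∀ k ≤ K, ∃ C, ∀ s, |deriv (deriv (φ k)) s| ≤ C)
    (hφthird : ∀ k, 1 ≤ k → k ≤ K → ∀ s, |deriv (deriv (deriv (φ k))) s| ≤ ε3)
    (hx : ∀ s, x s = ∑ k ∈ Finset.range (K + 1), xcomp A φ k s)
    (hgint : Integrable g)
    (hgL2 : MemLp g 2 (volume : Measure ℝ))
    (hgI1 : Integrable fun τ : ℝ => τ * g τ)
    (hgI3 : Integrable fun τ : ℝ => τ ^ 3 * g τ)
    (hgnorm : (∫ τ : ℝ, g τ) = 1)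
    (hadm_even : ∀ lam ξ, ‖breveG g lam (-ξ)‖ = ‖breveG g lam ξ‖)
    (hadm_dec : ∀ lam ξ1 ξ2, 0 ≤ ξ1 → ξ1 ≤ ξ2 → ‖breveG g lam ξ2‖ ≤ ‖breveG g lam ξ1‖)
    (hσ : ∀ s, 0 < σ s)
    (hτ0 : 0 < τ0) (hτ0' : τ0 < 1)
    (hξk : ∀ k ≤ K, ∃ ξk, 0 < ξk ∧ ‖chirpG g (crate φ σ k t) ξk‖ = τ0 ∧ ξk ≤ αf k)
    (hdisj : ∀ k ≤ K, ∀ l ≤ K, k ≠ l →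
      Disjoint {η : ℝ | |η - deriv (φ k) t| < αf k / σ t}
        {η : ℝ | |η - deriv (φ l) t| < αf l / σ t})
    (hErrsmall : ∀ l ≤ K,
      ErrL K A φ g σ αf ε1 ε3 l t < 1 / 2 * ‖chirpG g (crate φ σ l t) 0‖ * A l t)
    (hmain : 2 * Msum K A t * (τ0 + Pi0 g σ ε1 ε3 t) ≤ g0min K g φ σ t * muMin K A t)
    (heps1 : Msum K A t * (τ0 + Pi0 g σ ε1 ε3 t) ≤ epst)
    (heps2 : epst ≤ g0min K g φ σ t * muMin K A t - Msum K A t * (τ0 + Pi0 g σ ε1 ε3 t))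
    (Ginv : ℕ → ℝ → ℝ)
    (hGinv : ∀ l ≤ K, ∀ ξ, 0 ≤ ξ → Ginv l ‖chirpG g (crate φ σ l t) ξ‖ = ξ)
    (ηch : ℕ → ℝ)
    (hηmem : ∀ l, 1 ≤ l → l ≤ K → ηch l ∈ Htk x g σ φ αf t epst l)
    (hηmax : ∀ l, 1 ≤ l → l ≤ K → ∀ η ∈ Htk x g σ φ αf t epst l,
      ‖aSTFT x g σ t η‖ ≤ ‖aSTFT x g σ t (ηch l)‖)
    (hη0 : ηch 0 = 0)
    :
    ∀ l ≤ K,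
      ‖aSTFT x g σ t (ηch l) - chirpG g (crate φ σ l t) 0 * xcomp A φ l t‖ ≤
        ErrL K A φ g σ αf ε1 ε3 l t +
          2 * π * momentI g 1 * A l t *
            Ginv l (‖chirpG g (crate φ σ l t) 0‖ -
              2 * ErrL K A φ g σ αf ε1 ε3 l t / A l t) := by
  
  intro l hlK
  have hs : 0 < σ t := hσ t
  have hl_mem : l ∈ Finset.range (K+1) := Finset.mem_range.mpr (by omega)
  have hAl : 0 < A l t := hApos l hlK t
  -- moments
  have hI1eq : momentI g 1 = ∫ τ:ℝ, |τ| * |g τ| := by simp only [momentI, pow_one]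
  have hI3eq : momentI g 3 = ∫ τ:ℝ, |τ|^3 * |g τ| := rfl
  have hgi1 : Integrable fun τ:ℝ => |τ| * |g τ| := by
    have h := hgI1.abs
    simpa [abs_mul] using h
  have hgi3 : Integrable fun τ:ℝ => |τ|^3 * |g τ| := by
    have h := hgI3.abs
    simpa [abs_mul, abs_pow] using h
  have hI1nn : 0 ≤ momentI g 1 := by
    rw [hI1eq]; exact MeasureTheory.integral_nonneg fun τ => by positivity
  have hI3nn : 0 ≤ momentI g 3 := by
    rw [hI3eq]; exact MeasureTheory.integral_nonneg fun τ => by positivity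
  have hPi0eq : Pi0 g σ ε1 ε3 t
      = ε1 * (∫ τ:ℝ, |τ| * |g τ|) * σ t + π/3 * ε3 * (∫ τ:ℝ, |τ|^3 * |g τ|) * σ t^3 := by
    rw [Pi0, hI1eq, hI3eq]
  have hPi0nn : 0 ≤ Pi0 g σ ε1 ε3 t := by
    rw [Pi0]
    apply add_nonneg
    · exact mul_nonneg (mul_nonneg hε1.le hI1nn) hs.le
    · exact mul_nonneg (mul_nonneg (mul_nonneg (by positivity) hε3.le) hI3nn) (by positivity)
  have hMpos : 0 < Msum K A t := by
    rw [Msum]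
    apply Finset.sum_pos (fun k hk => hApos k (Nat.lt_succ_iff.mp (Finset.mem_range.mp hk)) t)
    exact ⟨0, by simp⟩
  have hxnorm : ∀ k, k ≤ K → ‖xcomp A φ k t‖ = A k t := by
    intro k hk
    rw [xcomp, norm_mul]
    rw [show (2*(π:ℂ)*((φ k t : ℝ):ℂ))*Complex.I = ((2*π*(φ k t):ℝ):ℂ)*Complex.I by push_cast; ring]
    rw [Complex.norm_exp_ofReal_mul_I, mul_one,
      Complex.norm_real, Real.norm_eq_abs, abs_of_pos (hApos k hk t)]
  have hαpos : ∀ k, k ≤ K → 0 < αf k := by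
    intro k hk; obtain ⟨ξ0, h0, _, h2⟩ := hξk k hk; linarith
  have hφcont : ∀ k, k ≤ K → Continuous (φ k) := fun k hk => (hφreg k hk).continuous
  have hφ0fun : φ 0 = fun _ => (0:ℝ) := funext hφ0
  have hf10 : deriv (φ 0) t = 0 := by rw [hφ0fun]; simp
  have htay : ∀ k, k ≤ K → ∀ h : ℝ,
      |φ k (t+h) - φ k t - deriv (φ k) t * h - deriv (deriv (φ k)) t * h^2/2| ≤ ε3 * |h|^3/6 := by
    intro k hk h
    rcases Nat.eq_zero_or_pos k with hk0 | hk1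
    · subst hk0
      rw [hφ0fun]
      simp only [deriv_const']
      simp
      positivity
    · exact taylor3 (φ k) (hφreg k hk) ε3 (hφthird k hk1 hk) t h
  -- monotonicity of ‖chirpG‖
  have hGdec : ∀ c ξ1 ξ2 : ℝ, 0 ≤ ξ1 → ξ1 ≤ ξ2 → ‖chirpG g c ξ2‖ ≤ ‖chirpG g c ξ1‖ := by
    intro c ξ1 ξ2 h1 h2
    rw [chirpG_eq_breveG, chirpG_eq_breveG]
    exact hadm_dec (-c) ξ1 ξ2 h1 h2
  have hGabs : ∀ c ξv : ℝ, ‖chirpG g c ξv‖ = ‖chirpG g c |ξv|‖ := by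
    intro c ξv
    rcases le_or_gt 0 ξv with h | h
    · rw [abs_of_nonneg h]
    · rw [abs_of_neg h, chirpG_eq_breveG, chirpG_eq_breveG]
      exact (hadm_even (-c) ξv).symm
  have hGmono : ∀ c w ξv : ℝ, 0 ≤ w → w ≤ |ξv| → ‖chirpG g c ξv‖ ≤ ‖chirpG g c w‖ := by
    intro c w ξv hw hwle
    rw [hGabs c ξv]
    exact hGdec c w |ξv| hw hwle
  -- geometry
  have hadj : ∀ k, k ≤ K → ∀ m, m ≤ K → k ≠ m →
      αf k + αf m ≤ σ t * |deriv (φ k) t - deriv (φ m) t| := by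
    intro k hk m hm hne
    by_contra hcon
    push_neg at hcon
    set a := deriv (φ k) t with ha
    set b := deriv (φ m) t with hb
    have hdisj' := hdisj k hk m hm hne
    have hsum : 0 < αf k + αf m := by linarith [hαpos k hk, hαpos m hm]
    set p := (αf m * a + αf k * b)/(αf k + αf m) with hp
    have habk : |b - a| * σ t < αf k + αf m := by
      rw [abs_sub_comm]
      nlinarith [abs_nonneg (a-b)]
    have h1 : |p - a| < αf k / σ t := by
      have key : |p - a| = αf k * |b - a| / (αf k + αf m) := by
        rw [show p - a = αf k * (b-a)/(αf k+αf m) by rw [hp]; field_simp; ring]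
        rw [abs_div, abs_mul, abs_of_pos hsum, abs_of_pos (hαpos k hk)]
      rw [key, div_lt_div_iff₀ hsum hs]
      nlinarith [hαpos k hk, abs_nonneg (b-a)]
    have h2 : |p - b| < αf m / σ t := by
      have key : |p - b| = αf m * |b - a| / (αf k + αf m) := by
        rw [show p - b = -(αf m * (b-a))/(αf k+αf m) by rw [hp]; field_simp; ring]
        rw [abs_div, abs_neg, abs_mul, abs_of_pos hsum, abs_of_pos (hαpos m hm)]
      rw [key, div_lt_div_iff₀ hsum hs]
      nlinarith [hαpos m hm, abs_nonneg (b-a)]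
    exact absurd hdisj' (Set.not_disjoint_iff.mpr ⟨p, h1, h2⟩)
  have hord : ∀ j, j + 1 ≤ K → deriv (φ j) t < deriv (φ (j+1)) t := by
    intro j hj
    rcases Nat.eq_zero_or_pos j with h0 | h1
    · subst h0
      rw [hf10]
      obtain ⟨c, hc0, hc⟩ := hφ'pos 1 le_rfl (by omega)
      exact lt_of_lt_of_le hc0 (hc t)
    · obtain ⟨d, hd0, hd⟩ := hfreq
      have h := hd (j+1) (by omega) (by omega) t
      simp only [Nat.add_sub_cancel] at h
      linarith
  have hSnn : ∀ k m : ℕ, k ≤ K → m ≤ K → 0 ≤ ∑ j ∈ Finset.Ioo (min k m) (max k m), αf j := by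
    intro k m hk hm
    apply Finset.sum_nonneg
    intro j hj
    have hj2 := (Finset.mem_Ioo.mp hj).2
    have : j ≤ K := by
      have : max k m ≤ K := max_le hk hm
      omega
    exact (hαpos j this).le
  have hchain : ∀ n, ∀ k, k < n → n ≤ K →
      Ups αf k n ≤ σ t * (deriv (φ n) t - deriv (φ k) t) := by
    intro n
    induction n with
    | zero => intro k hk; omega
    | succ n ih =>
      intro k hk hK
      have hadjn : αf n + αf (n+1) ≤ σ t * (deriv (φ (n+1)) t - deriv (φ n) t) := by
        have h := hadj n (by omega) (n+1) hK (by omega)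
        have hordn := hord n hK
        rw [abs_sub_comm, abs_of_pos (by linarith : (0:ℝ) < deriv (φ (n+1)) t - deriv (φ n) t)] at h
        linarith
      rcases Nat.lt_succ_iff_lt_or_eq.mp hk with hlt | heq
      · have h1 := ih k hlt (by omega)
        have hUpsEq : Ups αf k (n+1) = Ups αf k n + αf n + αf (n+1) := by
          rw [Ups, Ups]
          rw [min_eq_left (by omega : k ≤ n+1), max_eq_right (by omega : k ≤ n+1),
            min_eq_left (by omega : k ≤ n), max_eq_right (by omega : k ≤ n)]
          rw [← Finset.Ico_add_one_left_eq_Ioo, ← Finset.Ico_add_one_left_eq_Ioo,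
            Finset.sum_Ico_succ_top (by omega : k+1 ≤ n)]
          ring
        rw [hUpsEq]
        linarith
      · subst heq
        have hUpsEq : Ups αf k (k+1) = αf k + αf (k+1) := by
          rw [Ups, min_eq_left (by omega : k ≤ k+1), max_eq_right (by omega : k ≤ k+1)]
          rw [← Finset.Ico_add_one_left_eq_Ioo, Finset.Ico_self]
          simp
        rw [hUpsEq]
        linarith [hadjn]
  have hUps_sym : ∀ k m : ℕ, Ups αf k m = Ups αf m k := by
    intro k m
    rw [Ups, Ups, min_comm, max_comm]
    ring
  have hgap : ∀ k m : ℕ, k ≤ K → m ≤ K → k ≠ m →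
      Ups αf k m ≤ σ t * |deriv (φ k) t - deriv (φ m) t| := by
    intro k m hk hm hne
    rcases lt_or_gt_of_ne hne with h | h
    · have hc := hchain m k h hm
      rw [abs_sub_comm]
      have hUpos : 0 < Ups αf k m := by
        rw [Ups]
        have := hSnn k m hk hm
        nlinarith [hαpos k hk, hαpos m hm]
      rw [abs_of_pos (by nlinarith : (0:ℝ) < deriv (φ m) t - deriv (φ k) t)]
      exact hc
    · have hc := hchain k m h hk
      have hUpos : 0 < Ups αf m k := by
        rw [Ups]
        have := hSnn m k hm hk
        nlinarith [hαpos k hk, hαpos m hm]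
      rw [abs_of_pos (by nlinarith : (0:ℝ) < deriv (φ k) t - deriv (φ m) t)]
      rw [hUps_sym]
      exact hc
  have hUps_sub : ∀ k, k ≤ K → k ≠ l →
      Ups αf k l - αf l = αf k + 2 * ∑ j ∈ Finset.Ioo (min k l) (max k l), αf j := by
    intro k hk hne
    rw [Ups]; ring
  have hUps_sub_nn : ∀ k, k ≤ K → k ≠ l → 0 ≤ Ups αf k l - αf l := by
    intro k hk hne
    rw [hUps_sub k hk hne]
    have := hSnn k l hk hlK
    nlinarith [hαpos k hk]
  -- integrability of component integrands
  have hgmC : AEStronglyMeasurable (fun u : ℝ => (g u : ℂ)) volume :=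
    Complex.continuous_ofReal.comp_aestronglyMeasurable hgint.aestronglyMeasurable
  have hFint : ∀ k, k ≤ K → ∀ η : ℝ, Integrable (fun u : ℝ =>
      xcomp A φ k (t + σ t * u) * (g u : ℂ) *
        Complex.exp (-(2*(π:ℂ)*(η:ℝ)*((σ t : ℂ)*(u:ℂ)))*Complex.I)) := by
    intro k hk η
    obtain ⟨C, hC⟩ := hAbdd k hk
    apply Integrable.mono' (hgint.norm.const_mul C)
    · apply AEStronglyMeasurable.mul
      apply AEStronglyMeasurable.mul
      · apply Continuous.aestronglyMeasurable
        apply Continuous.mul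
        · exact Complex.continuous_ofReal.comp (((hAreg k hk).continuous).comp
            (continuous_const.add (continuous_const.mul continuous_id)))
        · apply Complex.continuous_exp.comp
          apply Continuous.mul _ continuous_const
          exact continuous_const.mul (Complex.continuous_ofReal.comp
            ((hφcont k hk).comp (continuous_const.add (continuous_const.mul continuous_id))))
      · exact hgmC
      · apply Continuous.aestronglyMeasurable
        apply Complex.continuous_exp.comp
        apply Continuous.mul _ continuous_const
        apply Continuous.neg
        exact continuous_const.mul (continuous_const.mul Complex.continuous_ofReal)
    · filter_upwards with u
      rw [xcomp, norm_mul, norm_mul, norm_mul]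
      rw [show (2*(π:ℂ)*((φ k (t + σ t * u) : ℝ):ℂ))*Complex.I
          = ((2*π*(φ k (t + σ t * u)) : ℝ):ℂ)*Complex.I by push_cast; ring]
      rw [show (-(2*(π:ℂ)*(η:ℝ)*((σ t : ℂ)*(u:ℂ)))*Complex.I)
          = ((-(2*π*η*(σ t * u)) : ℝ):ℂ)*Complex.I by push_cast; ring]
      rw [Complex.norm_exp_ofReal_mul_I]
      rw [Complex.norm_exp_ofReal_mul_I]
      simp only [Complex.norm_real, Real.norm_eq_abs, mul_one]
      exact mul_le_mul_of_nonneg_right (hC _) (abs_nonneg _)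
  -- Claim A
  have claimA : ∀ η : ℝ, ‖aSTFT x g σ t η - ∑ k ∈ Finset.range (K+1),
      xcomp A φ k t * chirpG g (crate φ σ k t) (σ t * (η - deriv (φ k) t))‖
      ≤ Msum K A t * Pi0 g σ ε1 ε3 t := by
    intro η
    rw [aSTFT_subst x g σ t η hs]
    have hsplit : (∫ u:ℝ, x (t + σ t * u) * (g u : ℂ) *
          Complex.exp (-(2*(π:ℂ)*(η:ℝ)*((σ t : ℂ)*(u:ℂ)))*Complex.I))
        = ∑ k ∈ Finset.range (K+1), ∫ u:ℝ, xcomp A φ k (t + σ t * u) * (g u : ℂ) *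
          Complex.exp (-(2*(π:ℂ)*(η:ℝ)*((σ t : ℂ)*(u:ℂ)))*Complex.I) := by
      rw [← MeasureTheory.integral_finset_sum _
        (fun k hk => hFint k (Nat.lt_succ_iff.mp (Finset.mem_range.mp hk)) η)]
      congr 1; ext u
      rw [hx (t + σ t * u), Finset.sum_mul, Finset.sum_mul]
    rw [hsplit, ← Finset.sum_sub_distrib]
    refine (norm_sum_le _ _).trans ?_
    have hb : ∀ k ∈ Finset.range (K+1),
        ‖(∫ u:ℝ, xcomp A φ k (t + σ t * u) * (g u : ℂ) *
            Complex.exp (-(2*(π:ℂ)*(η:ℝ)*((σ t : ℂ)*(u:ℂ)))*Complex.I))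
          - xcomp A φ k t * chirpG g (crate φ σ k t) (σ t * (η - deriv (φ k) t))‖
        ≤ A k t * Pi0 g σ ε1 ε3 t := by
      intro k hk
      have hk' : k ≤ K := Nat.lt_succ_iff.mp (Finset.mem_range.mp hk)
      have hce := comp_est (A k) (φ k) g ε1 ε3 (σ t) t η hgint hgi1 hgi3 hs
        ((hAreg k hk').continuous) (hφcont k hk') (hAbdd k hk') (hAlip k hk' t)
        (htay k hk') (hApos k hk' t)
      rw [hPi0eq]
      simp only [xcomp, crate]
      exact hce
    refine (Finset.sum_le_sum hb).trans ?_
    rw [Msum, Finset.sum_mul]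
  -- Claim C : zone estimate
  have claimC : ∀ η : ℝ, |η - deriv (φ l) t| < αf l / σ t →
      ‖aSTFT x g σ t η - chirpG g (crate φ σ l t) (σ t * (η - deriv (φ l) t)) * xcomp A φ l t‖
        ≤ ErrL K A φ g σ αf ε1 ε3 l t := by
    intro η hzone
    have hA1 := claimA η
    have hsplit := (Finset.add_sum_erase (Finset.range (K+1))
      (fun k => xcomp A φ k t * chirpG g (crate φ σ k t) (σ t * (η - deriv (φ k) t))) hl_mem).symm
    have hid : aSTFT x g σ t η - chirpG g (crate φ σ l t) (σ t * (η - deriv (φ l) t)) * xcomp A φ l t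
        = (aSTFT x g σ t η - ∑ k ∈ Finset.range (K+1),
            xcomp A φ k t * chirpG g (crate φ σ k t) (σ t * (η - deriv (φ k) t)))
          + ∑ k ∈ (Finset.range (K+1)).erase l,
            xcomp A φ k t * chirpG g (crate φ σ k t) (σ t * (η - deriv (φ k) t)) := by
      rw [hsplit]; ring
    rw [hid]
    refine (norm_add_le _ _).trans ?_
    have hcross : ‖∑ k ∈ (Finset.range (K+1)).erase l,
        xcomp A φ k t * chirpG g (crate φ σ k t) (σ t * (η - deriv (φ k) t))‖
        ≤ ∑ k ∈ (Finset.range (K+1)).erase l,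
          A k t * ‖chirpG g (crate φ σ k t) (Ups αf k l - αf l)‖ := by
      refine (norm_sum_le _ _).trans ?_
      apply Finset.sum_le_sum
      intro k hk
      have hkne : k ≠ l := (Finset.mem_erase.mp hk).1
      have hk' : k ≤ K := Nat.lt_succ_iff.mp (Finset.mem_range.mp (Finset.mem_erase.mp hk).2)
      rw [norm_mul, hxnorm k hk']
      apply mul_le_mul_of_nonneg_left _ (hApos k hk' t).le
      apply hGmono _ _ _ (hUps_sub_nn k hk' hkne)
      -- Ups - αf l ≤ |σ t * (η - f1 k)|
      have h1 : |σ t * (η - deriv (φ k) t)| = σ t * |η - deriv (φ k) t| := by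
        rw [abs_mul, abs_of_pos hs]
      rw [h1]
      have h2 : σ t * |η - deriv (φ l) t| < αf l := by
        rw [lt_div_iff₀ hs] at hzone
        linarith
      have h3 := hgap k l hk' hlK hkne
      have htri : |deriv (φ k) t - deriv (φ l) t| ≤ |η - deriv (φ k) t| + |η - deriv (φ l) t| := by
        calc |deriv (φ k) t - deriv (φ l) t|
            = |(η - deriv (φ l) t) - (η - deriv (φ k) t)| := by ring_nf
          _ ≤ |η - deriv (φ l) t| + |η - deriv (φ k) t| := abs_sub _ _
          _ = |η - deriv (φ k) t| + |η - deriv (φ l) t| := by ring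
      nlinarith [abs_nonneg (η - deriv (φ k) t)]
    rw [ErrL]
    exact add_le_add hA1 hcross
  -- G_k at Ups - αf l is ≤ τ0
  have hGτ : ∀ k, k ≤ K → k ≠ l →
      ‖chirpG g (crate φ σ k t) (Ups αf k l - αf l)‖ ≤ τ0 := by
    intro k hk hne
    obtain ⟨ξk, hξk0, hξkval, hξkle⟩ := hξk k hk
    rw [← hξkval]
    apply hGmono _ _ _ hξk0.le
    rw [abs_of_nonneg (hUps_sub_nn k hk hne)]
    rw [hUps_sub k hk hne]
    have := hSnn k l hk hlK
    linarith
  set E := ErrL K A φ g σ αf ε1 ε3 l t with hE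
  have hEnn : 0 ≤ E := by
    rw [hE, ErrL]
    apply add_nonneg (mul_nonneg hMpos.le hPi0nn)
    apply Finset.sum_nonneg
    intro k hk
    exact mul_nonneg (hApos k (Nat.lt_succ_iff.mp (Finset.mem_range.mp (Finset.mem_erase.mp hk).2)) t).le (norm_nonneg _)
  have hsum_erase : ∑ k ∈ (Finset.range (K+1)).erase l, A k t = Msum K A t - A l t := by
    have := Finset.add_sum_erase (Finset.range (K+1)) (fun k => A k t) hl_mem
    rw [Msum]
    linarith [this]
  have hElt : E < Msum K A t * (τ0 + Pi0 g σ ε1 ε3 t) := by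
    rw [hE, ErrL]
    have hsum_le : ∑ k ∈ (Finset.range (K+1)).erase l,
        A k t * ‖chirpG g (crate φ σ k t) (Ups αf k l - αf l)‖
        ≤ ∑ k ∈ (Finset.range (K+1)).erase l, A k t * τ0 := by
      apply Finset.sum_le_sum
      intro k hk
      have hkne : k ≠ l := (Finset.mem_erase.mp hk).1
      have hk' : k ≤ K := Nat.lt_succ_iff.mp (Finset.mem_range.mp (Finset.mem_erase.mp hk).2)
      exact mul_le_mul_of_nonneg_left (hGτ k hk' hkne) (hApos k hk' t).le
    rw [← Finset.sum_mul] at hsum_le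
    rw [hsum_erase] at hsum_le
    nlinarith [hτ0, hAl, hMpos]
  -- the value a := ‖G_l(0)‖
  set a := ‖chirpG g (crate φ σ l t) 0‖ with ha
  have hg0le : g0min K g φ σ t ≤ a := Finset.inf'_le _ hl_mem
  have hg0nn : 0 ≤ g0min K g φ σ t := by
    rw [g0min]
    apply Finset.le_inf'
    intro b _
    exact norm_nonneg _
  have hμle : muMin K A t ≤ A l t := Finset.inf'_le _ hl_mem
  have hμpos : 0 < muMin K A t := by
    rw [muMin, Finset.lt_inf'_iff]
    intro i hi
    exact hApos i (Nat.lt_succ_iff.mp (Finset.mem_range.mp hi)) t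
  -- lower bound at the center frequency
  have hzone_center : |deriv (φ l) t - deriv (φ l) t| < αf l / σ t := by
    rw [sub_self, abs_zero]
    exact div_pos (hαpos l hlK) hs
  have hcenter0 := claimC (deriv (φ l) t) hzone_center
  rw [sub_self, mul_zero] at hcenter0
  have hcenter : a * A l t - E ≤ ‖aSTFT x g σ t (deriv (φ l) t)‖ := by
    have h1 : ‖chirpG g (crate φ σ l t) 0 * xcomp A φ l t‖ = a * A l t := by
      rw [norm_mul, hxnorm l hlK]
    have h2 : ‖chirpG g (crate φ σ l t) 0 * xcomp A φ l t‖
        - ‖aSTFT x g σ t (deriv (φ l) t)‖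
        ≤ ‖aSTFT x g σ t (deriv (φ l) t) - chirpG g (crate φ σ l t) 0 * xcomp A φ l t‖ := by
      rw [norm_sub_rev]
      exact norm_sub_norm_le _ _
    rw [h1] at h2
    linarith
  have hεcenter : epst < ‖aSTFT x g σ t (deriv (φ l) t)‖ := by
    have hga : g0min K g φ σ t * muMin K A t ≤ a * A l t := by
      calc g0min K g φ σ t * muMin K A t ≤ g0min K g φ σ t * A l t :=
            mul_le_mul_of_nonneg_left hμle hg0nn
        _ ≤ a * A l t := mul_le_mul_of_nonneg_right hg0le hAl.le
    linarith
  have hcenter_mem : deriv (φ l) t ∈ Htk x g σ φ αf t epst l := by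
    simp only [Htk, Gt, Set.mem_setOf_eq]
    exact ⟨hεcenter, hzone_center⟩
  have hzone_l : |ηch l - deriv (φ l) t| < αf l / σ t := by
    rcases Nat.eq_zero_or_pos l with h0 | h1
    · subst h0
      rw [hη0, hf10]
      simpa using div_pos (hαpos 0 hlK) hs
    · have hmem := hηmem l h1 hlK
      simp only [Htk, Gt, Set.mem_setOf_eq] at hmem
      exact hmem.2
  have hVlb : a * A l t - E ≤ ‖aSTFT x g σ t (ηch l)‖ := by
    rcases Nat.eq_zero_or_pos l with h0 | h1
    · subst h0
      rw [hη0]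
      rw [hf10] at hcenter
      exact hcenter
    · exact hcenter.trans (hηmax l h1 hlK _ hcenter_mem)
  have hnear := claimC (ηch l) hzone_l
  set D := σ t * (ηch l - deriv (φ l) t) with hD
  have hGlow : a - 2*E/(A l t) ≤ ‖chirpG g (crate φ σ l t) D‖ := by
    have h1 : ‖chirpG g (crate φ σ l t) D * xcomp A φ l t‖
        = ‖chirpG g (crate φ σ l t) D‖ * A l t := by
      rw [norm_mul, hxnorm l hlK]
    have h2 : ‖aSTFT x g σ t (ηch l)‖ - ‖chirpG g (crate φ σ l t) D‖ * A l t ≤ E := by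
      have h3 := norm_sub_norm_le (aSTFT x g σ t (ηch l))
        (chirpG g (crate φ σ l t) D * xcomp A φ l t)
      rw [h1] at h3
      linarith
    have h4 : (a - 2*E/(A l t)) * A l t = a * A l t - 2*E := by field_simp
    have h3 : (a - 2*E/(A l t)) * A l t ≤ ‖chirpG g (crate φ σ l t) D‖ * A l t := by
      rw [h4]; linarith
    exact le_of_mul_le_mul_right h3 hAl
  have hvpos : 0 < a - 2*E/(A l t) := by
    have h1 := hErrsmall l hlK
    have h2 : 2*E/(A l t) < a := by
      rw [div_lt_iff₀ hAl]
      nlinarith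
    linarith
  have hva : a - 2*E/(A l t) ≤ a := by
    have : 0 ≤ 2*E/(A l t) := div_nonneg (by linarith) hAl.le
    linarith
  have hGcont : Continuous (fun ξ : ℝ => ‖chirpG g (crate φ σ l t) ξ‖) := by
    have hfun : chirpG g (crate φ σ l t) = FourierTransform.fourier
        (fun τ => Complex.exp (((π * (crate φ σ l t) * τ ^ 2 : ℝ) : ℂ) * Complex.I) * (g τ : ℂ)) :=
      funext (chirpG_eq_fourier g _)
    rw [hfun]
    apply Continuous.norm
    exact VectorFourier.fourierIntegral_continuous Real.continuous_fourierChar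
      (by exact continuous_inner) (chirp_integrand_integrable g hgint _)
  have hGtend : Filter.Tendsto (fun ξ : ℝ => ‖chirpG g (crate φ σ l t) ξ‖)
      Filter.atTop (nhds 0) := by
    have hfun : chirpG g (crate φ σ l t) = FourierTransform.fourier
        (fun τ => Complex.exp (((π * (crate φ σ l t) * τ ^ 2 : ℝ) : ℂ) * Complex.I) * (g τ : ℂ)) :=
      funext (chirpG_eq_fourier g _)
    rw [hfun]
    have h0 := Real.zero_at_infty_fourier
      (fun τ => Complex.exp (((π * (crate φ σ l t) * τ ^ 2 : ℝ) : ℂ) * Complex.I) * (g τ : ℂ))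
    have h1 : Filter.atTop ≤ Filter.cocompact ℝ := by
      rw [cocompact_eq_atBot_atTop]; exact le_sup_right
    have h2 := (h0.mono_left h1).norm
    simpa using h2
  obtain ⟨X, hX⟩ := ((hGtend.eventually_lt_const hvpos).and (Filter.eventually_ge_atTop 0)).exists
  have hIcc : (a - 2*E/(A l t)) ∈ Set.Icc (‖chirpG g (crate φ σ l t) X‖)
      (‖chirpG g (crate φ σ l t) 0‖) := ⟨hX.1.le, hva⟩
  obtain ⟨ξs, hξsmem, hξsval⟩ := intermediate_value_Icc' hX.2 hGcont.continuousOn hIcc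
  have hξs0 : 0 ≤ ξs := hξsmem.1
  have hGinv_v : Ginv l (a - 2*E/(A l t)) = ξs := by
    rw [← hξsval]
    exact hGinv l hlK ξs hξs0
  have hsD : σ t * |ηch l - deriv (φ l) t| ≤ ξs := by
    have habs : ‖chirpG g (crate φ σ l t) D‖
        = ‖chirpG g (crate φ σ l t) (σ t * |ηch l - deriv (φ l) t|)‖ := by
      rw [hGabs _ D, hD, abs_mul, abs_of_pos hs]
    by_contra hcon
    push_neg at hcon
    have h2 : ‖chirpG g (crate φ σ l t) (σ t * |ηch l - deriv (φ l) t|)‖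
        ≤ ‖chirpG g (crate φ σ l t) ξs‖ := hGdec _ ξs _ hξs0 hcon.le
    have heqv : ‖chirpG g (crate φ σ l t) (σ t * |ηch l - deriv (φ l) t|)‖
        = a - 2*E/(A l t) := by
      apply le_antisymm (h2.trans_eq hξsval)
      rw [← habs]
      exact hGlow
    have h3 := hGinv l hlK (σ t * |ηch l - deriv (φ l) t|)
      (mul_nonneg hs.le (abs_nonneg _))
    rw [heqv, hGinv_v] at h3
    linarith
  have hlipD := chirpG_lip g hgint hgi1 (crate φ σ l t) D
  have htri : ‖aSTFT x g σ t (ηch l) - chirpG g (crate φ σ l t) 0 * xcomp A φ l t‖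
      ≤ E + ‖chirpG g (crate φ σ l t) D - chirpG g (crate φ σ l t) 0‖ * A l t := by
    have hid2 : aSTFT x g σ t (ηch l) - chirpG g (crate φ σ l t) 0 * xcomp A φ l t
        = (aSTFT x g σ t (ηch l) - chirpG g (crate φ σ l t) D * xcomp A φ l t)
          + (chirpG g (crate φ σ l t) D - chirpG g (crate φ σ l t) 0) * xcomp A φ l t := by
      ring
    rw [hid2]
    refine (norm_add_le _ _).trans ?_
    rw [norm_mul, hxnorm l hlK]
    exact add_le_add hnear (le_refl _)
  refine htri.trans ?_
  rw [hGinv_v]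
  have h6 : |D| = σ t * |ηch l - deriv (φ l) t| := by rw [hD, abs_mul, abs_of_pos hs]
  have h5 : ‖chirpG g (crate φ σ l t) D - chirpG g (crate φ σ l t) 0‖ * A l t
      ≤ 2*π*momentI g 1 * A l t * ξs := by
    calc ‖chirpG g (crate φ σ l t) D - chirpG g (crate φ σ l t) 0‖ * A l t
        ≤ (2 * π * (∫ τ:ℝ, |τ| * |g τ|) * |D|) * A l t := mul_le_mul_of_nonneg_right hlipD hAl.le
      _ = 2*π*momentI g 1 * A l t * |D| := by rw [hI1eq]; ring
      _ ≤ 2*π*momentI g 1 * A l t * ξs := by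
          apply mul_le_mul_of_nonneg_left _
            (by positivity)
          rw [h6]
          exact hsD
  linarith
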